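/- Let C_i ≤ C_j be cyclic groups of orders i and j with i dividing j, and write i = uv where v is the largest divisor of i coprime to j/i. Then every element of any generating coset of C_j/C_i has order divisible by j/v. -/

import Mathlib

/-- Arithmetic core: if `i ∣ j`, `n ∣ j`, `j ∣ lcm n i`, `v ∣ i` with `v` coprime to `j/i`
and maximal such, then `j/v ∣ n`. -/
lemma stmt7_arith {j i n v : ℕ} (hj0 : j ≠ 0) (hn0 : n ≠ 0)
    (hij : i ∣ j) (hl : j ∣ Nat.lcm n i) (hv : v ∣ i)
    (hvcop : Nat.Coprime v (j / i)) (hvmax : ∀ w : ℕ, w ∣ i → Nat.Coprime w (j / i) → w ∣ v) :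
    j / v ∣ n := by
  have hi0 : i ≠ 0 := fun h => hj0 (by simpa [h] using hij)
  have hv0 : v ≠ 0 := fun h => hi0 (by simpa [h] using hv)
  have hvj : v ∣ j := hv.trans hij
  have hjv0 : j / v ≠ 0 := Nat.div_ne_zero_iff.mpr ⟨hv0, Nat.le_of_dvd (Nat.pos_of_ne_zero hj0) hvj⟩
  rw [← Nat.factorization_le_iff_dvd hjv0 hn0]
  intro p
  rcases em p.Prime with hp | hp
  · have hdiv : (j / v).factorization p = j.factorization p - v.factorization p := by
      rw [Nat.factorization_div hvj]; rfl
    have hdivi : (j / i).factorization p = j.factorization p - i.factorization p := by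
      rw [Nat.factorization_div hij]; rfl
    have hivj : i.factorization p ≤ j.factorization p :=
      (Nat.factorization_le_iff_dvd hi0 hj0).mpr hij p
    rcases em (p ∣ j / i) with hpd | hpd
    · -- p divides j/i : then p ∤ v and n has full p-power
      have hvp : v.factorization p = 0 := by
        have : ¬ p ∣ v := fun hpv =>
          hp.one_lt.ne' (Nat.eq_one_of_dvd_coprimes hvcop hpv hpd)
        simp [Nat.factorization_eq_zero_of_not_dvd this]
      have hji0' : j / i ≠ 0 :=
        Nat.div_ne_zero_iff.mpr ⟨hi0, Nat.le_of_dvd (Nat.pos_of_ne_zero hj0) hij⟩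
      have hji : 0 < (j / i).factorization p :=
        Nat.Prime.factorization_pos_of_dvd hp hji0' hpd
      have hlt : i.factorization p < j.factorization p := by omega
      have hmax : j.factorization p ≤ max (n.factorization p) (i.factorization p) := by
        have := (Nat.factorization_le_iff_dvd hj0 (Nat.lcm_ne_zero hn0 hi0)).mpr hl p
        rwa [Nat.factorization_lcm hn0 hi0, Finsupp.sup_apply] at this
      omega
    · -- p does not divide j/i : then p^(vp i) ∣ v and vp j = vp i
      have hwi : (p ^ i.factorization p) ∣ v := by
        refine hvmax _ (Nat.ordProj_dvd i p) ?_
        exact Nat.Coprime.pow_left _ ((Nat.Prime.coprime_iff_not_dvd hp).mpr hpd)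
      have hwv : i.factorization p ≤ v.factorization p := by
        have := (Nat.Prime.pow_dvd_iff_le_factorization hp hv0).mp hwi
        exact this
      have hji0 : (j / i).factorization p = 0 :=
        Nat.factorization_eq_zero_of_not_dvd hpd
      omega
  · simp [Nat.factorization_eq_zero_of_not_prime _ hp]

theorem stmt7 {Cj : Type*} [CommGroup Cj] [Finite Cj] [IsCyclic Cj]
    (j i u v : ℕ) (hj : Nat.card Cj = j) (Ci : Subgroup Cj) (hi : Nat.card Ci = i)
    (hij : i ∣ j) (huv : i = u * v) (hv : v ∣ i) (hvcop : Nat.Coprime v (j / i))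
    (hvmax : ∀ w : ℕ, w ∣ i → Nat.Coprime w (j / i) → w ∣ v) :
    ∀ h : Cj, Subgroup.zpowers (QuotientGroup.mk h : Cj ⧸ Ci) = ⊤ →
      (j / v) ∣ orderOf h := by
  intro h htop
  obtain ⟨g, hg⟩ := IsCyclic.exists_generator (α := Cj)
  have hog : orderOf g = j := by rw [orderOf_eq_card_of_forall_mem_zpowers hg, hj]
  have hj0 : j ≠ 0 := by
    rw [← hj]; exact Nat.card_pos.ne'
  -- write g = h^k * c with c ∈ Ci
  have hmem : (QuotientGroup.mk g : Cj ⧸ Ci) ∈ Subgroup.zpowers (QuotientGroup.mk h : Cj ⧸ Ci) := by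
    rw [htop]; trivial
  obtain ⟨k, hk⟩ := hmem
  have hk' : (QuotientGroup.mk (h ^ k) : Cj ⧸ Ci) = QuotientGroup.mk g := by
    rw [← hk]; rfl
  have hc : (h ^ k)⁻¹ * g ∈ Ci := (QuotientGroup.eq).mp hk'
  set c := (h ^ k)⁻¹ * g with hcdef
  have hgc : g = (h ^ k) * c := (mul_inv_cancel_left _ g).symm
  have hoc : orderOf c ∣ i := by
    rw [← hi]
    exact Subgroup.orderOf_dvd_natCard Ci hc
  have hohk : orderOf (h ^ k) ∣ orderOf h := by
    have := Subgroup.orderOf_dvd_natCard (Subgroup.zpowers h)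
      (Subgroup.zpow_mem _ (Subgroup.mem_zpowers h) k)
    rwa [Nat.card_zpowers] at this
  have hlcm : j ∣ Nat.lcm (orderOf h) i := by
    have hcomm : Commute (h ^ k) c := Commute.all _ _
    have := hcomm.orderOf_mul_dvd_lcm
    rw [← hgc, hog] at this
    exact this.trans (Nat.lcm_dvd (hohk.trans (Nat.dvd_lcm_left _ _))
      (hoc.trans (Nat.dvd_lcm_right _ _)))
  have hn0 : orderOf h ≠ 0 := (orderOf_pos h).ne'
  exact stmt7_arith hj0 hn0 hij hlcm hv hvcop hvmax
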